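/- Let c ≠ 0, t ≥ 0, and let χ be C² with 1 - χ(y) > 4/5, 1 - e^{ct}χ(y) > 4/5 at a point y. If at (t,y) one has χ''(y)(1 - e^{ct}χ(y)) + 2χ'(y)² e^{ct} = 0 (i.e. φ_{tyy}(t,y) = 0), then φ_{yy}(t,y) = -(2(e^{ct}-1)²/c) · χ'(y)² / ((1-χ(y))²(1-e^{ct}χ(y))²). In particular, if additionally χ'(y) ≠ 0 and t > 0, then φ_{yy}(t,y) ≠ 0. -/

import Mathlib

open Real

theorem phiyy_nonzero_when_phityy_zero (c t : ℝ) (hc : c ≠ 0) (ht : 0 ≤ t)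
    (χ : ℝ → ℝ) (hχ : ContDiff ℝ 2 χ) (y : ℝ)
    (h1 : 1 - χ y > 4 / 5) (h2 : 1 - Real.exp (c * t) * χ y > 4 / 5)
    (hzero : deriv (deriv χ) y * (1 - Real.exp (c * t) * χ y)
      + 2 * (deriv χ y) ^ 2 * Real.exp (c * t) = 0) :
    deriv (deriv (fun z => z + t + (2 / c) *
        Real.log ((1 - χ z) / (1 - Real.exp (c * t) * χ z)))) y
      = -(2 * (Real.exp (c * t) - 1) ^ 2 / c) * (deriv χ y) ^ 2 /
        ((1 - χ y) ^ 2 * (1 - Real.exp (c * t) * χ y) ^ 2)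
    ∧ (deriv χ y ≠ 0 → 0 < t →
        deriv (deriv (fun z => z + t + (2 / c) *
          Real.log ((1 - χ z) / (1 - Real.exp (c * t) * χ z)))) y ≠ 0) := by
  set E : ℝ := Real.exp (c * t) with hEdef
  have hE : 0 < E := Real.exp_pos _
  have hχd : Differentiable ℝ χ := hχ.differentiable (by norm_num)
  have hχ'c : ContDiff ℝ 1 (deriv χ) := by
    have h2' : ContDiff ℝ ((1 : WithTop ℕ∞) + 1) χ := by
      rw [(by norm_num : ((1 : WithTop ℕ∞) + 1) = 2)]; exact hχ
    exact (contDiff_succ_iff_deriv.mp h2').2.2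
  have hχ'd : Differentiable ℝ (deriv χ) := hχ'c.differentiable one_ne_zero
  set S : Set ℝ := {z : ℝ | 4 / 5 < 1 - χ z ∧ 4 / 5 < 1 - E * χ z} with hSdef
  have hSopen : IsOpen S := by
    apply IsOpen.inter
    · exact isOpen_lt continuous_const (continuous_const.sub hχd.continuous)
    · exact isOpen_lt continuous_const
        (continuous_const.sub (continuous_const.mul hχd.continuous))
  have hyS : y ∈ S := ⟨h1, h2⟩
  have hSnhds : S ∈ nhds y := hSopen.mem_nhds hyS
  have hu0 : ∀ z ∈ S, (0:ℝ) < 1 - χ z := fun z hz => lt_trans (by norm_num) hz.1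
  have hv0 : ∀ z ∈ S, (0:ℝ) < 1 - E * χ z := fun z hz => lt_trans (by norm_num) hz.2
  set g : ℝ → ℝ := fun z => z + t + (2 / c) * Real.log ((1 - χ z) / (1 - E * χ z))
    with hgdef
  set h : ℝ → ℝ := fun z => z + t + (2 / c) *
    (Real.log (1 - χ z) - Real.log (1 - E * χ z)) with hhdef
  have heq : g =ᶠ[nhds y] h := by
    filter_upwards [hSnhds] with z hz
    simp only [hgdef, hhdef, Real.log_div (hu0 z hz).ne' (hv0 z hz).ne']
  set h1f : ℝ → ℝ := fun z => 1 + (2 / c) *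
    ((-deriv χ z) / (1 - χ z) - (-(E * deriv χ z)) / (1 - E * χ z)) with hh1def
  have hderiv : ∀ z ∈ S, HasDerivAt h (h1f z) z := by
    intro z hz
    have d1 : HasDerivAt (fun w => 1 - χ w) (-deriv χ z) z :=
      (hχd z).hasDerivAt.const_sub 1
    have d2 : HasDerivAt (fun w => 1 - E * χ w) (-(E * deriv χ z)) z :=
      ((hχd z).hasDerivAt.const_mul E).const_sub 1
    have l1 := d1.log (hu0 z hz).ne'
    have l2 := d2.log (hv0 z hz).ne'
    have := ((hasDerivAt_id z).add_const t).add ((l1.sub l2).const_mul (2 / c))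
    exact this
  have e1 : deriv h =ᶠ[nhds y] h1f := by
    filter_upwards [hSnhds] with z hz
    exact (hderiv z hz).deriv
  have e2 : deriv g =ᶠ[nhds y] h1f := heq.deriv.trans e1
  have key : deriv (deriv g) y = deriv h1f y := e2.deriv.eq_of_nhds
  -- compute deriv h1f y
  have hu : (0:ℝ) < 1 - χ y := hu0 y hyS
  have hv : (0:ℝ) < 1 - E * χ y := hv0 y hyS
  set a : ℝ := deriv χ y with hadef
  set b : ℝ := deriv (deriv χ) y with hbdef
  have d1 : HasDerivAt (fun w => 1 - χ w) (-a) y := (hχd y).hasDerivAt.const_sub 1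
  have d2 : HasDerivAt (fun w => 1 - E * χ w) (-(E * a)) y :=
    ((hχd y).hasDerivAt.const_mul E).const_sub 1
  have n1 : HasDerivAt (fun w => -deriv χ w) (-b) y := (hχ'd y).hasDerivAt.neg
  have n2 : HasDerivAt (fun w => -(E * deriv χ w)) (-(E * b)) y :=
    ((hχ'd y).hasDerivAt.const_mul E).neg
  have q1 : HasDerivAt (fun w => (-deriv χ w) / (1 - χ w))
      (((-b) * (1 - χ y) - (-a) * (-a)) / (1 - χ y) ^ 2) y := n1.div d1 hu.ne'
  have q2 : HasDerivAt (fun w => (-(E * deriv χ w)) / (1 - E * χ w))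
      (((-(E * b)) * (1 - E * χ y) - (-(E * a)) * (-(E * a))) / (1 - E * χ y) ^ 2) y :=
    n2.div d2 hv.ne'
  have q : HasDerivAt h1f ((2 / c) *
      ((((-b) * (1 - χ y) - (-a) * (-a)) / (1 - χ y) ^ 2) -
       (((-(E * b)) * (1 - E * χ y) - (-(E * a)) * (-(E * a))) / (1 - E * χ y) ^ 2))) y :=
    ((q1.sub q2).const_mul (2 / c)).const_add 1
  have hb : b = -(2 * a ^ 2 * E) / (1 - E * χ y) := by
    field_simp
    linarith [hzero]
  have main : deriv (deriv g) y
      = -(2 * (E - 1) ^ 2 / c) * a ^ 2 / ((1 - χ y) ^ 2 * (1 - E * χ y) ^ 2) := by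
    rw [key, q.deriv, hb]
    field_simp
    ring
  refine ⟨main, fun ha htpos => ?_⟩
  rw [main]
  have hE1 : E ≠ 1 := by
    rw [hEdef]
    simp only [ne_eq, Real.exp_eq_one_iff]
    exact mul_ne_zero hc htpos.ne'
  have hnum : -(2 * (E - 1) ^ 2 / c) * a ^ 2 ≠ 0 := by
    apply mul_ne_zero _ (pow_ne_zero _ ha)
    apply neg_ne_zero.mpr
    exact div_ne_zero (mul_ne_zero two_ne_zero (pow_ne_zero _ (sub_ne_zero.mpr hE1))) hc
  exact div_ne_zero hnum (mul_pos (pow_pos hu 2) (pow_pos hv 2)).ne'
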